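/- arXiv:0902.1261 — 2 statements merged into one kernel-verified Lean document; each statement's English description precedes it below -/
import Mathlib

section
/- In the standing setup (canonical partial order ≼, maximal chain P, holes, pair admissibility with the standing assumption, and the sets X_ij), let x,y ∈ X_ij with x ↣ y. Then every linear order ≺ on X that is ε-compatible with d, extends ≼, and satisfies a_{i+1} ≺ x and a_{i+1} ≺ y also satisfies x ≺ y; and every linear order ≺ on X that is ε-compatible with d, extends ≼, and satisfies x ≺ a_{j−1} and y ≺ a_{j−1} also satisfies y ≺ x. -/
open Finset

variable {X : Type*}

/-- A dissimilarity on `X`: symmetric, nonnegative, zero on the diagonal. -/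
def IsDissimilarity (d : X → X → ℝ) : Prop :=
  (∀ x y, d x y = d y x) ∧ (∀ x y, 0 ≤ d x y) ∧ (∀ x, d x x = 0)

/-- Here `le` stands for the reflexive closure `⪯` of a linear order `≺` on `X`.
`EpsCompatible d le ε` says that the order is `ε`-compatible with `d`, i.e.
`d u v ≤ d x y + 2ε` whenever `x ⪯ u ⪯ v ⪯ y`. -/
def EpsCompatible (d : X → X → ℝ) (le : X → X → Prop) (ε : ℝ) : Prop :=
  ∀ x u v y, le x u → le u v → le v y → d u v ≤ d x y + 2 * ε

/-- The `l∞`-distance `‖d - d'‖∞ = max_{x,y} |d x y - d' x y|`. -/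
noncomputable def linfDist [Fintype X] [Nonempty X] (d d' : X → X → ℝ) : ℝ :=
  (Finset.univ : Finset (X × X)).sup' Finset.univ_nonempty
    fun p => |d p.1 p.2 - d' p.1 p.2|

/-- A dissimilarity is Robinsonian if it admits a compatible linear order. -/
def IsRobinsonian (d : X → X → ℝ) : Prop :=
  ∃ le : X → X → Prop, IsLinearOrder X le ∧ EpsCompatible d le 0

/-- The canonical relation `≼` determined by `d`, `ε` and the base pair `(p, q)`:
the smallest reflexive and transitive relation containing `(p, q)` and closed under the
betweenness rules coming from triplets `x, z, y` with `d x y > max (d x z) (d z y) + 2ε`. -/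
inductive Canon (d : X → X → ℝ) (ε : ℝ) (p q : X) : X → X → Prop
  | base : Canon d ε p q p q
  | refl (x : X) : Canon d ε p q x x
  | trans {x y z : X} : Canon d ε p q x y → Canon d ε p q y z → Canon d ε p q x z
  | rule1 {x y z : X} (h : d x y > max (d x z) (d z y) + 2 * ε)
      (hxz : Canon d ε p q x z) : Canon d ε p q z y
  | rule2 {x y z : X} (h : d x y > max (d x z) (d z y) + 2 * ε)
      (hzy : Canon d ε p q z y) : Canon d ε p q x z
  | rule3a {x y z : X} (h : d x y > max (d x z) (d z y) + 2 * ε)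
      (hxy : Canon d ε p q x y) : Canon d ε p q x z
  | rule3b {x y z : X} (h : d x y > max (d x z) (d z y) + 2 * ε)
      (hxy : Canon d ε p q x y) : Canon d ε p q z y
  | rule4 {x y z : X} (h : d x y > max (d x z) (d z y) + 2 * ε)
      (hzx : Canon d ε p q z x) : Canon d ε p q y z
  | rule5 {x y z : X} (h : d x y > max (d x z) (d z y) + 2 * ε)
      (hyz : Canon d ε p q y z) : Canon d ε p q z x
  | rule6a {x y z : X} (h : d x y > max (d x z) (d z y) + 2 * ε)
      (hyx : Canon d ε p q y x) : Canon d ε p q y z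
  | rule6b {x y z : X} (h : d x y > max (d x z) (d z y) + 2 * ε)
      (hyx : Canon d ε p q y x) : Canon d ε p q z x

/-- `x ? y` : `x` and `y` are incomparable for the canonical relation. -/
def CanonIncomp (d : X → X → ℝ) (ε : ℝ) (p q x y : X) : Prop :=
  ¬ Canon d ε p q x y ∧ ¬ Canon d ε p q y x

/-- `x ∈ X° = X \ P`, where `P = {a 0, …, a (n-1)}`. -/
def OutsideChain (a : ℕ → X) (n : ℕ) (x : X) : Prop := ∀ i, i < n → a i ≠ x

/-- The standing setup: `d` is a dissimilarity, `ε ≥ 0`, the canonical relation `≼`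
determined by `d`, `ε` and the distinct base pair `(p₀, q₀)` is antisymmetric (a partial
order), `a 0 ≼ a 1 ≼ … ≼ a (n-1)` is a maximal (by inclusion) chain of `(X, ≼)`, and
`a 0 ≼ x ≼ a (n-1)` for every `x ∈ X`. -/
structure RobinsonSetup (d : X → X → ℝ) (ε : ℝ) (p₀ q₀ : X) (a : ℕ → X) (n : ℕ) : Prop where
  dissim : IsDissimilarity d
  eps_nonneg : 0 ≤ ε
  base_ne : p₀ ≠ q₀
  antisymm : ∀ x y, Canon d ε p₀ q₀ x y → Canon d ε p₀ q₀ y x → x = y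
  npos : 0 < n
  chain : ∀ i j, i < j → j < n → Canon d ε p₀ q₀ (a i) (a j) ∧ a i ≠ a j
  maximal : ∀ x, OutsideChain a n x →
      ∃ i, i < n ∧ ¬ Canon d ε p₀ q₀ (a i) x ∧ ¬ Canon d ε p₀ q₀ x (a i)
  lower : ∀ x, Canon d ε p₀ q₀ (a 0) x
  upper : ∀ x, Canon d ε p₀ q₀ x (a (n - 1))

/-- `i(x)`: the largest index `i < n` with `a i ≼ x`. -/
noncomputable def iIdx (d : X → X → ℝ) (ε : ℝ) (p₀ q₀ : X) (a : ℕ → X) (n : ℕ) (x : X) : ℕ :=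
  sSup {i | i < n ∧ Canon d ε p₀ q₀ (a i) x}

/-- `j(x)`: the smallest index `j < n` with `x ≼ a j`. -/
noncomputable def jIdx (d : X → X → ℝ) (ε : ℝ) (p₀ q₀ : X) (a : ℕ → X) (n : ℕ) (x : X) : ℕ :=
  sInf {j | j < n ∧ Canon d ε p₀ q₀ x (a j)}

/-- `ε`-compatibility of the linear order given by the first `m` entries of the
sequence `b` (with the relevant dissimilarity restricted to those entries). -/
def SeqCompatible (d : X → X → ℝ) (b : ℕ → X) (m : ℕ) (ε : ℝ) : Prop :=
  ∀ q r s t : ℕ, q ≤ r → r ≤ s → s ≤ t → t < m → d (b r) (b s) ≤ d (b q) (b t) + 2 * ε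

/-- The sequence on `P ∪ {x}` obtained by inserting `x` into the hole `H k`,
i.e. between `a k` and `a (k+1)`. -/
def insertSeq (a : ℕ → X) (x : X) (k : ℕ) : ℕ → X := fun m =>
  if m ≤ k then a m else if m = k + 1 then x else a (m - 1)

/-- The sequence on `P ∪ {x, y}` obtained by inserting `x` into the hole `H k` and `y`
into the hole `H k'`, where `k ≤ k'` (and `x` placed before `y` if `k = k'`). -/
def insertSeq2 (a : ℕ → X) (x y : X) (k k' : ℕ) : ℕ → X := fun m =>
  if m ≤ k then a m
  else if m = k + 1 then x
  else if m ≤ k' + 1 then a (m - 1)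
  else if m = k' + 2 then y
  else a (m - 2)

/-- The hole `H k` is `x`-admissible: the linear order on `P ∪ {x}` obtained by inserting
`x` between `a k` and `a (k+1)` is `ε`-compatible with (the restriction of) `d`. -/
def HoleAdmissible (d : X → X → ℝ) (ε : ℝ) (a : ℕ → X) (n : ℕ) (x : X) (k : ℕ) : Prop :=
  SeqCompatible d (insertSeq a x k) (n + 1) ε

/-- The pair of holes `(H k, H k')` is `(x, y, c)`-admissible. -/
def PairHoleAdmissible (d : X → X → ℝ) (ε : ℝ) (a : ℕ → X) (n : ℕ)
    (x y : X) (k k' : ℕ) (c : ℝ) : Prop :=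
  HoleAdmissible d ε a n x k ∧ HoleAdmissible d ε a n y k' ∧
    ((k ≤ k' ∧ SeqCompatible d (insertSeq2 a x y k k') (n + 2) (c * ε)) ∨
     (k' ≤ k ∧ SeqCompatible d (insertSeq2 a y x k' k) (n + 2) (c * ε)))

/-- `d_x`: the mean of `min {d x (a k) : i < k < j}` and `max {d x (a k) : i < k < j}`. -/
noncomputable def dxVal (d : X → X → ℝ) (a : ℕ → X) (x : X) (i j : ℕ) : ℝ :=
  (sInf {r | ∃ k, i < k ∧ k < j ∧ r = d x (a k)} +
    sSup {r | ∃ k, i < k ∧ k < j ∧ r = d x (a k)}) / 2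

/-- Standing assumption: for all distinct `z, w ∈ X°` and each bounding hole `H k` of `z`
there is a `w`-admissible hole `H k'` such that `(H k, H k')` is `(z, w, 1)`-admissible. -/
def StandingAssumption (d : X → X → ℝ) (ε : ℝ) (p₀ q₀ : X) (a : ℕ → X) (n : ℕ) : Prop :=
  ∀ z w, z ≠ w → OutsideChain a n z → OutsideChain a n w →
    ∀ k, (k = iIdx d ε p₀ q₀ a n z ∨ k = jIdx d ε p₀ q₀ a n z - 1) →
      ∃ k', iIdx d ε p₀ q₀ a n w ≤ k' ∧ k' ≤ jIdx d ε p₀ q₀ a n w - 1 ∧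
        PairHoleAdmissible d ε a n z w k k' 1

/-- `x ∈ X_ij`. -/
def InXij (d : X → X → ℝ) (ε : ℝ) (p₀ q₀ : X) (a : ℕ → X) (n i j : ℕ) (x : X) : Prop :=
  OutsideChain a n x ∧ iIdx d ε p₀ q₀ a n x = i ∧ jIdx d ε p₀ q₀ a n x = j

/-- `{x, y} ∈ L_ij` : `d x y < max (d_x) (d_y) - 3ε`. -/
def LPair (d : X → X → ℝ) (ε : ℝ) (a : ℕ → X) (i j : ℕ) (x y : X) : Prop :=
  d x y < max (dxVal d a x i j) (dxVal d a y i j) - 3 * ε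

/-- `x` and `y` lie in a common block: same connected component of the graph `(X_ij, L_ij)`. -/
def SameBlock (d : X → X → ℝ) (ε : ℝ) (p₀ q₀ : X) (a : ℕ → X) (n i j : ℕ) (x y : X) : Prop :=
  Relation.ReflTransGen
    (fun u v => InXij d ε p₀ q₀ a n i j u ∧ InXij d ε p₀ q₀ a n i j v ∧ LPair d ε a i j u v)
    x y

/-- `x ↣ y` : rule (A1) or (A2). -/
def ArrowRel (d : X → X → ℝ) (ε : ℝ) (p₀ q₀ : X) (a : ℕ → X) (n i j : ℕ) (x y : X) : Prop :=
  dxVal d a x i j < dxVal d a y i j - 4 * ε ∨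
    (dxVal d a y i j - 4 * ε ≤ dxVal d a x i j ∧
      ∃ z, InXij d ε p₀ q₀ a n i j z ∧ ¬ LPair d ε a i j x z ∧ ¬ LPair d ε a i j y z ∧
        d x z < d y z - 16 * ε)

/-- The arc `x → y` of the directed graph `L→_ij` : rule (L1) or (L2). -/
def LArc (d : X → X → ℝ) (ε : ℝ) (p₀ q₀ : X) (a : ℕ → X) (n i j : ℕ) (x y : X) : Prop :=
  InXij d ε p₀ q₀ a n i j x ∧ InXij d ε p₀ q₀ a n i j y ∧
    ((ArrowRel d ε p₀ q₀ a n i j x y ∧ SameBlock d ε p₀ q₀ a n i j x y) ∨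
      d x y < max (dxVal d a x i j) (dxVal d a y i j) - 5 * ε)

/-- `x` and `y` lie in a common cell: same strongly connected component of `L→_ij`. -/
def SameCell (d : X → X → ℝ) (ε : ℝ) (p₀ q₀ : X) (a : ℕ → X) (n i j : ℕ) (x y : X) : Prop :=
  Relation.ReflTransGen (LArc d ε p₀ q₀ a n i j) x y ∧
    Relation.ReflTransGen (LArc d ε p₀ q₀ a n i j) y x

lemma insertSeq_at {a : ℕ → X} {x : X} (k : ℕ) : insertSeq a x k (k + 1) = x := by
  simp [insertSeq]

lemma insertSeq_left {a : ℕ → X} {x : X} {k m : ℕ} (h : m ≤ k) : insertSeq a x k m = a m := by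
  simp [insertSeq, h]

lemma insertSeq_right {a : ℕ → X} {x : X} {k m : ℕ} (h : k + 1 < m) :
    insertSeq a x k m = a (m - 1) := by
  have h1 : ¬ m ≤ k := by omega
  have h2 : m ≠ k + 1 := by omega
  simp [insertSeq, h1, h2]

/-- Key fact: for `u ∈ X_ij` (with some companion `w ∈ X°`, `w ≠ u`), every inner
distance `d u (a k)` (for `i < k < j`) is within `ε` of `d_u`. -/
lemma inner_close (d : X → X → ℝ) (ε : ℝ) (p₀ q₀ : X) (a : ℕ → X) (n : ℕ)
    (hs : RobinsonSetup d ε p₀ q₀ a n) (hstand : StandingAssumption d ε p₀ q₀ a n)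
    (i j : ℕ) (hij : i + 2 ≤ j) (hj : j < n)
    (u w : X) (huw : u ≠ w) (hu : InXij d ε p₀ q₀ a n i j u) (hw : OutsideChain a n w)
    (k : ℕ) (hk1 : i < k) (hk2 : k < j) :
    dxVal d a u i j ≤ d u (a k) + ε ∧ d u (a k) ≤ dxVal d a u i j + ε := by
  obtain ⟨hout, hiI, hjI⟩ := hu
  have hsym := hs.dissim.1
  obtain ⟨k₁, -, -, hadm1, -⟩ := hstand u w huw hout hw i (Or.inl hiI.symm)
  obtain ⟨k₂, -, -, hadm2, -⟩ := hstand u w huw hout hw (j - 1) (Or.inr (by rw [hjI]))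
  have hpair : ∀ k l, i < k → k < j → i < l → l < j → d u (a k) ≤ d u (a l) + 2 * ε := by
    intro k l hk hk' hl hl'
    rcases le_total k l with h | h
    · have h0 := hadm1 (i + 1) (i + 1) (k + 1) (l + 1) le_rfl (by omega) (by omega) (by omega)
      rw [insertSeq_at, insertSeq_right (show i + 1 < k + 1 by omega),
        insertSeq_right (show i + 1 < l + 1 by omega)] at h0
      simpa using h0
    · have h0 := hadm2 l k ((j - 1) + 1) ((j - 1) + 1) h (by omega) le_rfl (by omega)
      rw [insertSeq_at, insertSeq_left (show k ≤ j - 1 by omega),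
        insertSeq_left (show l ≤ j - 1 by omega)] at h0
      rw [hsym u (a k), hsym u (a l)]
      exact h0
  set S := {r : ℝ | ∃ m, i < m ∧ m < j ∧ r = d u (a m)} with hS
  have hne : S.Nonempty := ⟨d u (a (i + 1)), i + 1, by omega, by omega, rfl⟩
  have hub : ∀ r ∈ S, r ≤ d u (a k) + 2 * ε := by
    rintro r ⟨m, hm1, hm2, rfl⟩; exact hpair m k hm1 hm2 hk1 hk2
  have hlb : ∀ r ∈ S, d u (a k) - 2 * ε ≤ r := by
    rintro r ⟨m, hm1, hm2, rfl⟩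
    have := hpair k m hk1 hk2 hm1 hm2; linarith
  have hbdd : BddAbove S := ⟨d u (a k) + 2 * ε, hub⟩
  have hbddb : BddBelow S := ⟨d u (a k) - 2 * ε, hlb⟩
  have hmem : d u (a k) ∈ S := ⟨k, hk1, hk2, rfl⟩
  have h1 := csInf_le hbddb hmem
  have h2 := le_csSup hbdd hmem
  have h3 := csSup_le hne hub
  have h4 := le_csInf hne hlb
  have hdx : dxVal d a u i j = (sInf S + sSup S) / 2 := rfl
  constructor <;> rw [hdx] <;> linarith

/-- If `x, y ∈ X_ij` with `x ↣ y`, then `x ≺ y` in every `ε`-compatible linear order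
extending `≼` with `a (i+1) ≺ {x, y}`, and `y ≺ x` in every `ε`-compatible linear order
extending `≼` with `{x, y} ≺ a (j-1)`. -/
theorem arrow_forces_order (d : X → X → ℝ) (ε : ℝ) (p₀ q₀ : X) (a : ℕ → X) (n : ℕ)
    (hs : RobinsonSetup d ε p₀ q₀ a n)
    (hstand : StandingAssumption d ε p₀ q₀ a n)
    (i j : ℕ) (hij : i + 2 ≤ j) (hj : j < n)
    (x y : X) (hx : InXij d ε p₀ q₀ a n i j x) (hy : InXij d ε p₀ q₀ a n i j y)
    (hxy : ArrowRel d ε p₀ q₀ a n i j x y) :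
    (∀ le : X → X → Prop, IsLinearOrder X le → EpsCompatible d le ε →
      (∀ u v, Canon d ε p₀ q₀ u v → le u v) →
      le (a (i + 1)) x → a (i + 1) ≠ x → le (a (i + 1)) y → a (i + 1) ≠ y →
      le x y ∧ x ≠ y) ∧
    (∀ le : X → X → Prop, IsLinearOrder X le → EpsCompatible d le ε →
      (∀ u v, Canon d ε p₀ q₀ u v → le u v) →
      le x (a (j - 1)) → x ≠ a (j - 1) → le y (a (j - 1)) → y ≠ a (j - 1) →
      le y x ∧ y ≠ x) := by
  have hsym := hs.dissim.1
  have hε := hs.eps_nonneg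
  -- x ≠ y
  have hne : x ≠ y := by
    rintro rfl
    rcases hxy with h | ⟨-, z, -, -, -, hdz⟩
    · linarith
    · linarith
  -- the bounds at the inner indices i+1 and j-1
  have hbx1 := inner_close d ε p₀ q₀ a n hs hstand i j hij hj x y hne hx hy.1
    (i + 1) (by omega) (by omega)
  have hby1 := inner_close d ε p₀ q₀ a n hs hstand i j hij hj y x hne.symm hy hx.1
    (i + 1) (by omega) (by omega)
  have hbx2 := inner_close d ε p₀ q₀ a n hs hstand i j hij hj x y hne hx hy.1
    (j - 1) (by omega) (by omega)
  have hby2 := inner_close d ε p₀ q₀ a n hs hstand i j hij hj y x hne.symm hy hx.1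
    (j - 1) (by omega) (by omega)
  -- bounds for the witness z in case (A2)
  have hbz : ∀ z, InXij d ε p₀ q₀ a n i j z →
      (dxVal d a z i j ≤ d z (a (i + 1)) + ε ∧ d z (a (i + 1)) ≤ dxVal d a z i j + ε) ∧
      (dxVal d a z i j ≤ d z (a (j - 1)) + ε ∧ d z (a (j - 1)) ≤ dxVal d a z i j + ε) := by
    intro z hz
    obtain ⟨w, hzw, hwout⟩ : ∃ w, z ≠ w ∧ OutsideChain a n w := by
      by_cases h : z = x
      · exact ⟨y, h ▸ hne, hy.1⟩
      · exact ⟨x, h, hx.1⟩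
    exact ⟨inner_close d ε p₀ q₀ a n hs hstand i j hij hj z w hzw hz hwout
        (i + 1) (by omega) (by omega),
      inner_close d ε p₀ q₀ a n hs hstand i j hij hj z w hzw hz hwout
        (j - 1) (by omega) (by omega)⟩
  -- from ¬ LPair x z, get d x z ≥ d_z - 3ε
  have hnL : ∀ z, ¬ LPair d ε a i j x z → dxVal d a z i j - 3 * ε ≤ d x z := by
    intro z h
    unfold LPair at h
    push_neg at h
    have := le_max_right (dxVal d a x i j) (dxVal d a z i j)
    linarith
  constructor
  · intro le hlin hcomp hext h1 h1ne h2 h2ne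
    have hrefl : ∀ t, le t t := fun t =>
      hlin.toIsPartialOrder.toIsPreorder.toRefl.refl t
    have hyx_false : le y x → False := by
      intro hyx
      rcases hxy with hA1 | ⟨-, z, hz, hxznL, -, hdz⟩
      · -- (A1): d_x < d_y - 4ε
        have hc := hcomp (a (i + 1)) (a (i + 1)) y x (hrefl _) h2 hyx
        have e1 := hsym (a (i + 1)) y
        have e2 := hsym (a (i + 1)) x
        linarith [hbx1.2, hby1.1]
      · -- (A2)
        have hge := hnL z hxznL
        have hzb := (hbz z hz).1
        rcases hlin.toTotal.total z y with hzy | hyz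
        · have hc := hcomp z z y x (hrefl _) hzy hyx
          have e1 := hsym z y
          have e2 := hsym z x
          linarith
        · have hc := hcomp (a (i + 1)) y z z h2 hyz (hrefl _)
          have e1 := hsym (a (i + 1)) z
          linarith [hzb.2]
    have hxy' : le x y := (hlin.toTotal.total x y).resolve_right hyx_false
    exact ⟨hxy', hne⟩
  · intro le hlin hcomp hext h1 h1ne h2 h2ne
    have hrefl : ∀ t, le t t := fun t =>
      hlin.toIsPartialOrder.toIsPreorder.toRefl.refl t
    have hxy_false : le x y → False := by
      intro hxy'
      rcases hxy with hA1 | ⟨-, z, hz, hxznL, -, hdz⟩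
      · -- (A1)
        have hc := hcomp x y (a (j - 1)) (a (j - 1)) hxy' h2 (hrefl _)
        linarith [hbx2.2, hby2.1]
      · -- (A2)
        have hge := hnL z hxznL
        have hzb := (hbz z hz).2
        rcases hlin.toTotal.total y z with hyz | hzy
        · have hc := hcomp x y z z hxy' hyz (hrefl _)
          linarith
        · have hc := hcomp z z y (a (j - 1)) (hrefl _) hzy h2
          have e1 := hsym z y
          linarith [hzb.2]
    have hyx' : le y x := (hlin.toTotal.total y x).resolve_right hxy_false
    exact ⟨hyx', hne.symm⟩
end

section
/- In the standing setup (canonical partial order ≼, maximal chain P, holes, pair admissibility with the standing assumption, and the sets X_ij), let x, x', y ∈ X_ij be such that x and x' belong to a common cell of L→_ij while y belongs to a different block than x and x'. Then there is no linear order ≺ on X that is ε-compatible with d and satisfies x ≺ y ≺ x'. -/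
open Finset

variable {X : Type*}

section Auxiliary

variable {X : Type*}

private lemma exists_crossing {α : Type*} {r : α → α → Prop} (Q : α → Prop) {s t : α}
    (h : Relation.ReflTransGen r s t) (hQs : Q s) :
    ¬ Q t → ∃ u v, Relation.ReflTransGen r s u ∧ r u v ∧ Q u ∧ ¬ Q v := by
  induction h with
  | refl => exact fun h' => absurd hQs h'
  | @tail b c hp hstp ih =>
    intro hQc
    by_cases hb : Q b
    · exact ⟨b, c, hp, hstp, hb, hQc⟩
    · exact ih hb

private lemma dist_chain_close (d : X → X → ℝ) (ε : ℝ) (a : ℕ → X) (n : ℕ) (w : X) (i j : ℕ)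
    (hsym : ∀ x y, d x y = d y x) (hij : i + 2 ≤ j) (hj : j < n)
    (hadmL : HoleAdmissible d ε a n w i) (hadmR : HoleAdmissible d ε a n w (j - 1)) :
    ∀ k k', i < k → k < j → i < k' → k' < j → d w (a k) ≤ d w (a k') + 2 * ε := by
  intro k k' hik hkj hik' hk'j
  rcases le_total k k' with h | h
  · have H := hadmL (i + 1) (i + 1) (k + 1) (k' + 1) le_rfl (by omega) (by omega) (by omega)
    have e1 : insertSeq a w i (i + 1) = w := by
      unfold insertSeq; rw [if_neg (by omega), if_pos rfl]
    have e2 : insertSeq a w i (k + 1) = a k := by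
      unfold insertSeq; rw [if_neg (by omega), if_neg (by omega)]; congr 1
    have e3 : insertSeq a w i (k' + 1) = a k' := by
      unfold insertSeq; rw [if_neg (by omega), if_neg (by omega)]; congr 1
    rw [e1, e2, e3] at H
    exact H
  · have H := hadmR k' k j j h (by omega) le_rfl (by omega)
    have e1 : insertSeq a w (j - 1) k = a k := by
      unfold insertSeq; rw [if_pos (by omega)]
    have e2 : insertSeq a w (j - 1) k' = a k' := by
      unfold insertSeq; rw [if_pos (by omega)]
    have e3 : insertSeq a w (j - 1) j = w := by
      unfold insertSeq; rw [if_neg (by omega), if_pos (by omega)]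
    rw [e1, e2, e3] at H
    rw [hsym w (a k), hsym w (a k')]
    exact H

private lemma dxVal_close (d : X → X → ℝ) (ε : ℝ) (a : ℕ → X) (n : ℕ) (w : X) (i j : ℕ)
    (hsym : ∀ x y, d x y = d y x) (hij : i + 2 ≤ j) (hj : j < n)
    (hadmL : HoleAdmissible d ε a n w i) (hadmR : HoleAdmissible d ε a n w (j - 1)) :
    ∀ k, i < k → k < j →
      dxVal d a w i j - ε ≤ d w (a k) ∧ d w (a k) ≤ dxVal d a w i j + ε := by
  have diff := dist_chain_close d ε a n w i j hsym hij hj hadmL hadmR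
  set S : Set ℝ := {r | ∃ k, i < k ∧ k < j ∧ r = d w (a k)} with hS
  have hmem0 : d w (a (i + 1)) ∈ S := ⟨i + 1, by omega, by omega, rfl⟩
  have key : ∀ r ∈ S, ∀ r' ∈ S, r ≤ r' + 2 * ε := by
    rintro r ⟨k, h1, h2, rfl⟩ r' ⟨k', h1', h2', rfl⟩
    exact diff k k' h1 h2 h1' h2'
  have hbdd : BddAbove S := ⟨d w (a (i + 1)) + 2 * ε, fun r hr => key r hr _ hmem0⟩
  have hbddb : BddBelow S := ⟨d w (a (i + 1)) - 2 * ε, fun r hr => by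
    have := key _ hmem0 r hr; linarith⟩
  have hne : S.Nonempty := ⟨_, hmem0⟩
  have hsup : sSup S ≤ sInf S + 2 * ε := by
    apply csSup_le hne
    intro r hr
    have h1 : r - 2 * ε ≤ sInf S :=
      le_csInf hne fun r' hr' => by have := key r hr r' hr'; linarith
    linarith
  intro k h1 h2
  have hmem : d w (a k) ∈ S := ⟨k, h1, h2, rfl⟩
  have h3 := csInf_le hbddb hmem
  have h4 := le_csSup hbdd hmem
  have hd : dxVal d a w i j = (sInf S + sSup S) / 2 := by rw [hS]; rfl
  constructor <;> rw [hd] <;> linarith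

end Auxiliary

/-- If `x, x'` belong to a common cell but `y` belongs to a different block than `x, x'`,
then no `ε`-compatible linear order satisfies `x ≺ y ≺ x'`. -/
theorem no_order_between_cells (d : X → X → ℝ) (ε : ℝ) (p₀ q₀ : X) (a : ℕ → X) (n : ℕ)
    (hs : RobinsonSetup d ε p₀ q₀ a n)
    (hstand : StandingAssumption d ε p₀ q₀ a n)
    (i j : ℕ) (hij : i + 2 ≤ j) (hj : j < n)
    (x x' y : X) (hx : InXij d ε p₀ q₀ a n i j x) (hx' : InXij d ε p₀ q₀ a n i j x')
    (hy : InXij d ε p₀ q₀ a n i j y)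
    (hcell : SameCell d ε p₀ q₀ a n i j x x')
    (hblock : ¬ SameBlock d ε p₀ q₀ a n i j x y)
    (hblock' : ¬ SameBlock d ε p₀ q₀ a n i j x' y) :
    ¬ ∃ le : X → X → Prop, IsLinearOrder X le ∧ EpsCompatible d le ε ∧
        (le x y ∧ x ≠ y) ∧ (le y x' ∧ y ≠ x') := by
  rintro ⟨le, hlin, hcomp, ⟨hxy, hxney⟩, ⟨hyx', hynex'⟩⟩
  obtain ⟨hsym, hnn, hdiag⟩ := hs.dissim
  have hε := hs.eps_nonneg
  have href : ∀ z, le z z := fun z => hlin.toIsPartialOrder.toIsPreorder.toRefl.refl z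
  have htrans : ∀ p q r : X, le p q → le q r → le p r := fun p q r h1 h2 =>
    hlin.toIsPartialOrder.toIsPreorder.toIsTrans.trans p q r h1 h2
  have hanti : ∀ p q : X, le p q → le q p → p = q := fun p q h1 h2 =>
    hlin.toIsPartialOrder.toAntisymm.antisymm p q h1 h2
  have htot : ∀ p q : X, le p q ∨ le q p := fun p q => hlin.toTotal.total p q
  -- Tool T1 : inner chain distances are within ε of dxVal
  have T1 : ∀ w, InXij d ε p₀ q₀ a n i j w → ∀ k, i < k → k < j →
      dxVal d a w i j - ε ≤ d w (a k) ∧ d w (a k) ≤ dxVal d a w i j + ε := by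
    intro w hw
    obtain ⟨p', hp'O, hne⟩ : ∃ p', OutsideChain a n p' ∧ w ≠ p' := by
      by_cases hwx : w = x
      · exact ⟨y, hy.1, by rw [hwx]; exact hxney⟩
      · exact ⟨x, hx.1, hwx⟩
    obtain ⟨k₁, -, -, hpair₁⟩ := hstand w p' hne hw.1 hp'O i (Or.inl hw.2.1.symm)
    obtain ⟨k₂, -, -, hpair₂⟩ := hstand w p' hne hw.1 hp'O (j - 1) (Or.inr (by rw [hw.2.2]))
    exact dxVal_close d ε a n w i j hsym hij hj hpair₁.1 hpair₂.1
  -- block machinery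
  have hLPsymm : ∀ u v, LPair d ε a i j u v → LPair d ε a i j v u := by
    intro u v h
    unfold LPair at h ⊢
    rw [hsym v u, max_comm]
    exact h
  have stepSymm : ∀ {u v : X},
      (InXij d ε p₀ q₀ a n i j u ∧ InXij d ε p₀ q₀ a n i j v ∧ LPair d ε a i j u v) →
      (InXij d ε p₀ q₀ a n i j v ∧ InXij d ε p₀ q₀ a n i j u ∧ LPair d ε a i j v u) := by
    rintro u v ⟨h1, h2, h3⟩
    exact ⟨h2, h1, hLPsymm _ _ h3⟩
  have sbSymm : ∀ u v, SameBlock d ε p₀ q₀ a n i j u v → SameBlock d ε p₀ q₀ a n i j v u := by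
    intro u v h
    induction h with
    | refl => exact Relation.ReflTransGen.refl
    | tail hp hstp ih =>
      exact Relation.ReflTransGen.trans (Relation.ReflTransGen.single (stepSymm hstp)) ih
  have arcSB : ∀ u v, LArc d ε p₀ q₀ a n i j u v → SameBlock d ε p₀ q₀ a n i j u v := by
    rintro u v ⟨hu, hv, ⟨-, hb⟩ | h2⟩
    · exact hb
    · refine Relation.ReflTransGen.single ⟨hu, hv, ?_⟩
      unfold LPair
      linarith
  have rtgSB : ∀ u v, Relation.ReflTransGen (LArc d ε p₀ q₀ a n i j) u v →
      SameBlock d ε p₀ q₀ a n i j u v := by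
    intro u v h
    induction h with
    | refl => exact Relation.ReflTransGen.refl
    | tail hp harc ih => exact ih.trans (arcSB _ _ harc)
  have hnotLP : ∀ w, InXij d ε p₀ q₀ a n i j w → SameBlock d ε p₀ q₀ a n i j x w →
      ¬ LPair d ε a i j w y := fun w hwX hB hL =>
    hblock (hB.trans (Relation.ReflTransGen.single ⟨hwX, hy, hL⟩))
  -- first crossing arc : u ≺ y ≺ v
  have hnotx'y : ¬ le x' y := fun h => hynex' (hanti _ _ hyx' h)
  obtain ⟨u, v, pxu, harc, huy, hnvy⟩ :=
    exists_crossing (fun w => le w y) hcell.1 hxy hnotx'y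
  have hyv : le y v := (htot v y).resolve_left hnvy
  have huv : le u v := htrans _ _ _ huy hyv
  have hSBxu := rtgSB _ _ pxu
  have hSBxv := hSBxu.trans (arcSB _ _ harc)
  have huX : InXij d ε p₀ q₀ a n i j u := harc.1
  have hvX : InXij d ε p₀ q₀ a n i j v := harc.2.1
  have R1 : ∀ k, i < k → k < j → ¬ le v (a k) := by
    intro k hk1 hk2 hvak
    rcases harc.2.2 with ⟨hA, -⟩ | h2
    · rcases hA with hA1 | ⟨-, z, hzX, hLuz, hLvz, hdz⟩
      · have hq := hcomp u v (a k) (a k) huv hvak (href _)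
        have t1u := T1 u huX k hk1 hk2
        have t1v := T1 v hvX k hk1 hk2
        linarith [t1u.2, t1v.1]
      · have hnvz : ¬ le v z := by
          intro h
          have hq := hcomp u v z z huv h (href _)
          linarith
        have hzv : le z v := (htot z v).resolve_right hnvz
        have hq := hcomp z z v (a k) (href _) hzv hvak
        have t1z := T1 z hzX k hk1 hk2
        have hL : max (dxVal d a u i j) (dxVal d a z i j) - 3 * ε ≤ d u z := le_of_not_gt hLuz
        have hzvs : d z v = d v z := hsym z v
        linarith [t1z.2, le_max_right (dxVal d a u i j) (dxVal d a z i j)]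
    · have hq1 := hcomp u u y v (href _) huy hyv
      have hq2 := hcomp u y v v huy hyv (href _)
      have h1 : max (dxVal d a u i j) (dxVal d a y i j) - 3 * ε ≤ d u y :=
        le_of_not_gt (hnotLP u huX hSBxu)
      have h2' : max (dxVal d a v i j) (dxVal d a y i j) - 3 * ε ≤ d v y :=
        le_of_not_gt (hnotLP v hvX hSBxv)
      have hvys : d v y = d y v := hsym v y
      have hu_lt : dxVal d a u i j < max (dxVal d a u i j) (dxVal d a v i j) := by
        linarith [le_max_left (dxVal d a u i j) (dxVal d a y i j)]
      have hv_lt : dxVal d a v i j < max (dxVal d a u i j) (dxVal d a v i j) := by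
        linarith [le_max_left (dxVal d a v i j) (dxVal d a y i j)]
      exact absurd (max_lt hu_lt hv_lt) (lt_irrefl _)
  -- second crossing arc : v' ≺ y ≺ u'
  have hnotyx : ¬ le y x := fun h => hxney (hanti _ _ hxy h)
  obtain ⟨u', v', px'u', harc', hyu', hnyv'⟩ :=
    exists_crossing (fun w => le y w) hcell.2 hyx' hnotyx
  have hv'y : le v' y := (htot y v').resolve_left hnyv'
  have hv'u' : le v' u' := htrans _ _ _ hv'y hyu'
  have hSBxx' := rtgSB _ _ hcell.1
  have hSBx'u' := rtgSB _ _ px'u'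
  have hSBxu' := hSBxx'.trans hSBx'u'
  have hSBxv' := hSBxu'.trans (arcSB _ _ harc')
  have hu'X : InXij d ε p₀ q₀ a n i j u' := harc'.1
  have hv'X : InXij d ε p₀ q₀ a n i j v' := harc'.2.1
  have R2 : ∀ k, i < k → k < j → ¬ le (a k) v' := by
    intro k hk1 hk2 hakv'
    rcases harc'.2.2 with ⟨hA, -⟩ | h2
    · rcases hA with hA1 | ⟨-, z', hz'X, hLu'z', hLv'z', hdz'⟩
      · have hq := hcomp (a k) (a k) v' u' (href _) hakv' hv'u'
        have t1u' := T1 u' hu'X k hk1 hk2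
        have t1v' := T1 v' hv'X k hk1 hk2
        have e1 : d (a k) v' = d v' (a k) := hsym (a k) v'
        have e2 : d (a k) u' = d u' (a k) := hsym (a k) u'
        linarith [t1u'.2, t1v'.1]
      · have hnz'v' : ¬ le z' v' := by
          intro h
          have hq := hcomp z' z' v' u' (href _) h hv'u'
          have e1 : d z' v' = d v' z' := hsym z' v'
          have e2 : d z' u' = d u' z' := hsym z' u'
          linarith
        have hv'z' : le v' z' := (htot z' v').resolve_left hnz'v'
        have hq := hcomp (a k) v' z' z' hakv' hv'z' (href _)
        have t1z' := T1 z' hz'X k hk1 hk2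
        have e1 : d (a k) z' = d z' (a k) := hsym (a k) z'
        have hL : max (dxVal d a u' i j) (dxVal d a z' i j) - 3 * ε ≤ d u' z' :=
          le_of_not_gt hLu'z'
        linarith [t1z'.2, le_max_right (dxVal d a u' i j) (dxVal d a z' i j)]
    · have hq1 := hcomp v' v' y u' (href _) hv'y hyu'
      have hq2 := hcomp v' y u' u' hv'y hyu' (href _)
      have h1 : max (dxVal d a v' i j) (dxVal d a y i j) - 3 * ε ≤ d v' y :=
        le_of_not_gt (hnotLP v' hv'X hSBxv')
      have h2' : max (dxVal d a u' i j) (dxVal d a y i j) - 3 * ε ≤ d u' y :=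
        le_of_not_gt (hnotLP u' hu'X hSBxu')
      have e1 : d v' u' = d u' v' := hsym v' u'
      have e2 : d y u' = d u' y := hsym y u'
      have hu'_lt : dxVal d a u' i j < max (dxVal d a u' i j) (dxVal d a v' i j) := by
        linarith [le_max_left (dxVal d a u' i j) (dxVal d a y i j)]
      have hv'_lt : dxVal d a v' i j < max (dxVal d a u' i j) (dxVal d a v' i j) := by
        linarith [le_max_left (dxVal d a v' i j) (dxVal d a y i j)]
      exact absurd (max_lt hu'_lt hv'_lt) (lt_irrefl _)
  -- final contradiction : an LPair edge of the common block crosses a (i+1)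
  have hSBvv' : SameBlock d ε p₀ q₀ a n i j v v' := (sbSymm _ _ hSBxv).trans hSBxv'
  have hk01 : i < i + 1 := by omega
  have hk02 : i + 1 < j := by omega
  have hak0v : le (a (i + 1)) v := (htot v (a (i + 1))).resolve_left (R1 (i + 1) hk01 hk02)
  obtain ⟨w, w₂, -, hstep, hQw, hnQw₂⟩ :=
    exists_crossing (fun w => le (a (i + 1)) w) hSBvv' hak0v (R2 (i + 1) hk01 hk02)
  obtain ⟨hwX, hw₂X, hLP⟩ := hstep
  have hw₂ak0 : le w₂ (a (i + 1)) := (htot (a (i + 1)) w₂).resolve_left hnQw₂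
  have hq1 := hcomp w₂ w₂ (a (i + 1)) w (href _) hw₂ak0 hQw
  have hq2 := hcomp w₂ (a (i + 1)) w w hw₂ak0 hQw (href _)
  have t1w := T1 w hwX (i + 1) hk01 hk02
  have t1w₂ := T1 w₂ hw₂X (i + 1) hk01 hk02
  have e1 : d (a (i + 1)) w = d w (a (i + 1)) := hsym (a (i + 1)) w
  have e2 : d w₂ w = d w w₂ := hsym w₂ w
  have hLP' : d w w₂ < max (dxVal d a w i j) (dxVal d a w₂ i j) - 3 * ε := hLP
  have hw_lt : dxVal d a w i j < max (dxVal d a w i j) (dxVal d a w₂ i j) := by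
    linarith [t1w.1]
  have hw₂_lt : dxVal d a w₂ i j < max (dxVal d a w i j) (dxVal d a w₂ i j) := by
    linarith [t1w₂.1]
  exact absurd (max_lt hw_lt hw₂_lt) (lt_irrefl _)
end
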